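/- Let G be a graph whose chromatic quasisymmetric function X̃_G(t) = Σ_i f_i t^i (f_i symmetric functions, top degree |E|) is palindromic (f_i = f_{|E|-i}) and Schur-unimodal (f_{i+1} - f_i Schur-positive for 0 ≤ i ≤ (|E|-1)/2). Suppose λ1, λ2 are partitions and there is an injection from P-tableaux of shape λ1 to P-tableaux of shape λ2 shifting the inversion statistic by a constant c. Then for every j, the number of P-tableaux of shape λ2 with j inversions is at least the number of P-tableaux of shape λ1 with j inversions. -/
import Mathlib

/-- Suppose the sequences `S1 j`, `S2 j` (the numbers of `P`-tableaux of shapes `λ₁`, `λ₂`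
with `j` inversions, i.e. the coefficients of `t^j` on the Schur functions `s_{λ₁}`, `s_{λ₂}`
in a chromatic quasisymmetric function `X̃_G(t)` of top degree `|E|`) vanish outside `[0, E]`,
are palindromic (`S (E - j) = S j`, from `X̃_G(t) = t^{|E|} X̃_G(t⁻¹)`), and are unimodal on the
first half (`S j ≤ S j'` for `j ≤ j' ≤ E/2`, from Schur-unimodality). If there is an injection
shifting the inversion statistic by a constant `c`, so that `S1 j ≤ S2 (j + c)` for all `j`,
then `S1 j ≤ S2 j` for every `j`. -/
theorem weight_shift_injection_dominance (E : ℕ) (c : ℤ) (S1 S2 : ℤ → ℕ)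
    (h1van : ∀ j : ℤ, j < 0 ∨ (E : ℤ) < j → S1 j = 0)
    (h2van : ∀ j : ℤ, j < 0 ∨ (E : ℤ) < j → S2 j = 0)
    (h1pal : ∀ j : ℤ, S1 ((E : ℤ) - j) = S1 j)
    (h2pal : ∀ j : ℤ, S2 ((E : ℤ) - j) = S2 j)
    (h1uni : ∀ j j' : ℤ, j ≤ j' → 2 * j' ≤ (E : ℤ) → S1 j ≤ S1 j')
    (h2uni : ∀ j j' : ℤ, j ≤ j' → 2 * j' ≤ (E : ℤ) → S2 j ≤ S2 j')
    (hinj : ∀ j : ℤ, S1 j ≤ S2 (j + c)) :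
    ∀ j : ℤ, S1 j ≤ S2 j := by
  have half : ∀ j : ℤ, 0 ≤ j → 2 * j ≤ (E : ℤ) → S1 j ≤ S2 j := by
    intro j hj0 hj
    rcases le_or_gt c 0 with hc | hc
    · calc S1 j ≤ S2 (j + c) := hinj j
        _ ≤ S2 j := h2uni _ _ (by linarith) hj
    · calc S1 j = S1 ((E:ℤ) - j) := (h1pal j).symm
        _ ≤ S2 ((E:ℤ) - j + c) := hinj _
        _ = S2 (j - c) := by rw [show (E:ℤ) - j + c = (E:ℤ) - (j - c) by ring, h2pal]
        _ ≤ S2 j := h2uni _ _ (by linarith) hj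
  intro j
  rcases lt_or_ge j 0 with h | h
  · rw [h1van j (Or.inl h)]; exact Nat.zero_le _
  rcases lt_or_ge (E:ℤ) j with h' | h'
  · rw [h1van j (Or.inr h')]; exact Nat.zero_le _
  rcases le_or_gt (2*j) (E:ℤ) with hh | hh
  · exact half j h hh
  · rw [← h1pal j, ← h2pal j]
    exact half _ (by linarith) (by linarith)
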